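/- Let X be a finite set and let E ⊆ X × X be a symmetric relation that contains the diagonal {(x,x) : x ∈ X} and is connected (for all x, y ∈ X there is k with (x,y) ∈ E^{∘k}). Let r ≥ 1 and q, s ∈ ℕ satisfy 3q ≤ s and q − r ≥ K, where K = max_{x ∈ X} |{y ∈ X : (x,y) ∈ E^{∘r}}|. Suppose that for every x ∈ X there exists y ∈ X with (x,y) ∉ E^{∘q}. Then there exists a bijection σ : X → X such that for every x ∈ X, (x, σ(x)) ∈ E^{∘s} and (x, σ(x)) ∉ E^{∘r}. -/

import Mathlib

/-- Composition of relations. -/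
def relComp {X : Type*} (E F : Set (X × X)) : Set (X × X) :=
  {p | ∃ z, (p.1, z) ∈ E ∧ (z, p.2) ∈ F}

/-- Iterated composition `E^{∘k}`; by convention `E^{∘0}` is the diagonal, so that
`E^{∘1} = E`. -/
def relPow {X : Type*} (E : Set (X × X)) : ℕ → Set (X × X)
  | 0 => {p | p.1 = p.2}
  | n + 1 => relComp E (relPow E n)

section Stmt13Aux

variable {X : Type*} {E : Set (X × X)}

lemma relPow_mono' (hdiag : ∀ x : X, (x, x) ∈ E) {k m : ℕ} (h : k ≤ m) :
    relPow E k ⊆ relPow E m := by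
  induction h with
  | refl => exact subset_rfl
  | step h ih =>
    intro p hp
    exact ⟨p.1, hdiag p.1, ih hp⟩

lemma relPow_add' : ∀ {a b : ℕ} {x y z : X}, (x, y) ∈ relPow E a →
    (y, z) ∈ relPow E b → (x, z) ∈ relPow E (a + b) := by
  intro a
  induction a with
  | zero =>
    intro b x y z h1 h2
    have hxy : x = y := h1
    subst hxy
    simpa using h2
  | succ a ih =>
    intro b x y z h1 h2
    obtain ⟨w, hw1, hw2⟩ := h1
    have : (x, z) ∈ relPow E ((a + b) + 1) := ⟨w, hw1, ih hw2 h2⟩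
    have heq : (a + b) + 1 = a + 1 + b := by omega
    rwa [heq] at this

lemma relPow_split' : ∀ {a b : ℕ} {x z : X}, (x, z) ∈ relPow E (a + b) →
    ∃ y, (x, y) ∈ relPow E a ∧ (y, z) ∈ relPow E b := by
  intro a
  induction a with
  | zero =>
    intro b x z h
    exact ⟨x, rfl, by simpa using h⟩
  | succ a ih =>
    intro b x z h
    have h' : (x, z) ∈ relPow E ((a + b) + 1) := by
      have heq : a + 1 + b = (a + b) + 1 := by omega
      rwa [heq] at h
    obtain ⟨w, hw1, hw2⟩ := h'
    obtain ⟨y, hy1, hy2⟩ := ih hw2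
    exact ⟨y, ⟨w, hw1, hy1⟩, hy2⟩

lemma relPow_symm' (hsymm : ∀ p ∈ E, (p.2, p.1) ∈ E) :
    ∀ {k : ℕ} {x y : X}, (x, y) ∈ relPow E k → (y, x) ∈ relPow E k := by
  intro k
  induction k with
  | zero =>
    intro x y h
    exact (show x = y from h).symm
  | succ k ih =>
    intro x y h
    obtain ⟨z, hz1, hz2⟩ := h
    have h1 : (y, z) ∈ relPow E k := ih hz2
    have h2 : (z, x) ∈ relPow E 1 := ⟨x, hsymm _ hz1, rfl⟩
    exact relPow_add' h1 h2

end Stmt13Aux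

/-- Let `X` be a finite set with a symmetric, reflexive, connected
relation `E`.  Let `r ≥ 1` and `q, s` satisfy `3q ≤ s` and `q − r ≥ K`, where `K` is the
maximal cardinality of a ball `{y : (x,y) ∈ E^{∘r}}` (expressed below as
`|{y : (x,y) ∈ E^{∘r}}| + r ≤ q` for every `x`).  If every point `x` has some `y` with
`(x,y) ∉ E^{∘q}`, then there is a bijection `σ : X → X` with
`(x, σ x) ∈ E^{∘s} ∖ E^{∘r}` for every `x`. -/
theorem stmt_13 {X : Type*} [Fintype X] (E : Set (X × X))
    (hsymm : ∀ p ∈ E, (p.2, p.1) ∈ E)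
    (hdiag : ∀ x : X, (x, x) ∈ E)
    (hconn : ∀ x y : X, ∃ k : ℕ, (x, y) ∈ relPow E k)
    (r q s : ℕ) (hr : 1 ≤ r) (hs : 3 * q ≤ s)
    (hq : ∀ x : X, ({y | (x, y) ∈ relPow E r}).ncard + r ≤ q)
    (hfar : ∀ x : X, ∃ y : X, (x, y) ∉ relPow E q) :
    ∃ σ : X ≃ X, ∀ x : X, (x, σ x) ∈ relPow E s ∧ (x, σ x) ∉ relPow E r := by
  classical
  letI : LinearOrder X := LinearOrder.lift' (Fintype.equivFin X) (Equiv.injective _)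
  -- the graph distance
  let d : X → X → ℕ := fun x y => Nat.find (hconn x y)
  have hd_mem : ∀ x y, (x, y) ∈ relPow E (d x y) := fun x y => Nat.find_spec (hconn x y)
  have hd_le : ∀ {x y : X} {k : ℕ}, (x, y) ∈ relPow E k → d x y ≤ k :=
    fun {x y k} h => Nat.find_le h
  have hd_iff : ∀ (x y : X) (k : ℕ), (x, y) ∈ relPow E k ↔ d x y ≤ k := by
    intro x y k
    constructor
    · exact hd_le
    · intro h
      exact relPow_mono' hdiag h (hd_mem x y)
  have hd_symm : ∀ x y : X, d x y = d y x := by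
    intro x y
    exact le_antisymm (hd_le (relPow_symm' hsymm (hd_mem y x)))
      (hd_le (relPow_symm' hsymm (hd_mem x y)))
  have hd_self : ∀ x : X, d x x = 0 := by
    intro x
    exact Nat.le_zero.mp (hd_le (show (x, x) ∈ relPow E 0 from rfl))
  have hd_tri : ∀ x y z : X, d x z ≤ d x y + d y z := by
    intro x y z
    exact hd_le (relPow_add' (hd_mem x y) (hd_mem y z))
  -- existence of points at exact distance t, for every t ≤ d x y
  have hexact : ∀ (x y : X) (t : ℕ), t ≤ d x y → ∃ z, d x z = t := by
    intro x y t ht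
    have hsplit : (x, y) ∈ relPow E (t + (d x y - t)) := by
      rw [Nat.add_sub_cancel' ht]; exact hd_mem x y
    obtain ⟨z, hz1, hz2⟩ := relPow_split' hsplit
    have h1 : d x z ≤ t := hd_le hz1
    have h2 : d z y ≤ d x y - t := hd_le hz2
    have h3 : d x y ≤ d x z + d z y := hd_tri x z y
    exact ⟨z, by omega⟩
  -- every point has some point at distance > q
  have hfar' : ∀ x : X, ∃ y : X, q < d x y := by
    intro x
    obtain ⟨y, hy⟩ := hfar x
    refine ⟨y, ?_⟩
    by_contra h
    exact hy ((hd_iff x y q).mpr (by omega))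
  -- hence every t ≤ q + 1 is realized as a distance from any point
  have hreal : ∀ (x : X) (t : ℕ), t ≤ q + 1 → ∃ z, d x z = t := by
    intro x t ht
    obtain ⟨y, hy⟩ := hfar' x
    exact hexact x y t (by omega)
  -- balls
  let ball : X → Finset X := fun x => Finset.univ.filter (fun y => d x y ≤ r)
  have hball_card : ∀ x, (ball x).card + r ≤ q := by
    intro x
    have hset : ((ball x : Finset X) : Set X) = {y | (x, y) ∈ relPow E r} := by
      ext y
      simp [ball, hd_iff]
    have : (ball x).card = ({y | (x, y) ∈ relPow E r}).ncard := by
      rw [← hset, Set.ncard_coe_finset]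
    rw [this]
    exact hq x
  -- handle the empty case
  rcases isEmpty_or_nonempty X with hX | hX
  · exact ⟨Equiv.refl X, fun x => (IsEmpty.false x).elim⟩
  -- counting points at prescribed distances
  have hcard_ge : ∀ (x : X) (a b : ℕ), b ≤ q + 1 →
      (Finset.Icc a b).card ≤
        (Finset.univ.filter (fun y => a ≤ d x y ∧ d x y ≤ b)).card := by
    intro x a b hb
    have hsel : ∀ t : ℕ, ∃ z : X, t ≤ q + 1 → d x z = t := by
      intro t
      by_cases ht : t ≤ q + 1
      · obtain ⟨z, hz⟩ := hreal x t ht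
        exact ⟨z, fun _ => hz⟩
      · exact ⟨x, fun h => absurd h ht⟩
    choose g hg using hsel
    apply Finset.card_le_card_of_injOn g
    · intro t ht
      rw [Finset.mem_coe, Finset.mem_Icc] at ht
      have hgt : d x (g t) = t := hg t (by omega)
      simp only [Finset.mem_coe, Finset.mem_filter, Finset.mem_univ, true_and, hgt]
      exact ht
    · intro t1 h1 t2 h2 he
      rw [Finset.mem_coe, Finset.mem_Icc] at h1 h2
      have e1 : d x (g t1) = t1 := hg t1 (by omega)
      have e2 : d x (g t2) = t2 := hg t2 (by omega)
      rw [← e1, ← e2, he]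
  have hrq : r + 1 ≤ q := by
    obtain ⟨x⟩ := hX
    have h1 : 1 ≤ (ball x).card := by
      refine Finset.card_pos.mpr ⟨x, ?_⟩
      simp [ball, hd_self x]
    have := hball_card x
    omega
  have hq2r : 2 * r + 1 ≤ q := by
    obtain ⟨x⟩ := hX
    have h1 := hcard_ge x 0 r (by omega)
    have h2 : (Finset.univ.filter (fun y => 0 ≤ d x y ∧ d x y ≤ r)).card
        = (ball x).card := by
      congr 1
      apply Finset.filter_congr
      intro y _
      simp
    rw [Nat.card_Icc] at h1
    have := hball_card x
    omega
  -- the annulus around each point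
  let Ann : X → Finset X := fun x =>
    Finset.univ.filter (fun y => r + 1 ≤ d x y ∧ d x y ≤ q + 1)
  have hAnn_card : ∀ x, q - r + 1 ≤ (Ann x).card := by
    intro x
    have h1 := hcard_ge x (r + 1) (q + 1) (le_refl _)
    rw [Nat.card_Icc] at h1
    have : q + 1 + 1 - (r + 1) = q - r + 1 := by omega
    rw [this] at h1
    exact h1
  -- the Hall system: each x may be matched with any y with r < d x y ≤ 3q
  let t : X → Finset X := fun x =>
    Finset.univ.filter (fun y => r < d x y ∧ d x y ≤ 3 * q)
  have hhall : ∀ A : Finset X, A.card ≤ (A.biUnion t).card := by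
    intro A
    set N := A.biUnion t with hN
    have hmemN : ∀ y : X, y ∈ N ↔ ∃ a ∈ A, r < d a y ∧ d a y ≤ 3 * q := by
      intro y
      simp only [hN, Finset.mem_biUnion, t, Finset.mem_filter, Finset.mem_univ, true_and]
    set AC := A \ N with hAC
    have key0 : ∀ a ∈ AC, ∀ b ∈ A, d b a ≤ r ∨ 3 * q < d b a := by
      intro a ha b hb
      by_contra h
      push_neg at h
      have : a ∈ N := (hmemN a).mpr ⟨b, hb, by omega, h.2⟩
      rw [hAC, Finset.mem_sdiff] at ha
      exact ha.2 this
    have key0' : ∀ a ∈ AC, ∀ b ∈ A, d a b ≤ r ∨ 3 * q < d a b := by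
      intro a ha b hb
      rw [hd_symm]
      exact key0 a ha b hb
    have hACA : AC ⊆ A := Finset.sdiff_subset
    -- clusters
    let cls : X → Finset X := fun a => AC.filter (fun b => d a b ≤ r)
    have hself : ∀ a ∈ AC, a ∈ cls a := by
      intro a ha
      simp [cls, ha, hd_self a]
    have hclseq : ∀ a ∈ AC, ∀ b ∈ AC, d a b ≤ r → cls a = cls b := by
      intro a ha b hb hab
      ext c
      simp only [cls, Finset.mem_filter, and_congr_right_iff]
      intro hc
      constructor
      · intro hac
        have h1 : d b c ≤ d b a + d a c := hd_tri b a c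
        rw [hd_symm b a] at h1
        rcases key0' b hb c (hACA hc) with h | h
        · exact h
        · omega
      · intro hbc
        have h1 : d a c ≤ d a b + d b c := hd_tri a b c
        rcases key0' a ha c (hACA hc) with h | h
        · exact h
        · omega
    let rep : X → X := fun a =>
      if h : (cls a).Nonempty then (cls a).min' h else a
    have hrep_mem : ∀ a ∈ AC, rep a ∈ cls a := by
      intro a ha
      have hne : (cls a).Nonempty := ⟨a, hself a ha⟩
      simp only [rep, dif_pos hne]
      exact Finset.min'_mem _ hne
    have hcls_sub : ∀ a, cls a ⊆ AC := fun a => Finset.filter_subset _ _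
    have hrep_cls : ∀ a ∈ AC, cls (rep a) = cls a := by
      intro a ha
      have h1 := hrep_mem a ha
      simp only [cls, Finset.mem_filter] at h1
      exact (hclseq a ha (rep a) h1.1 h1.2).symm
    have hrep_fix : ∀ a ∈ AC, rep (rep a) = rep a := by
      intro a ha
      have h1 : rep a ∈ AC := hcls_sub a (hrep_mem a ha)
      have hne : (cls a).Nonempty := ⟨a, hself a ha⟩
      have hne' : (cls (rep a)).Nonempty := ⟨rep a, hself _ h1⟩
      have step1 : rep (rep a) = (cls (rep a)).min' hne' := dif_pos hne'
      have step2 : (cls (rep a)).min' hne' = (cls a).min' hne := by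
        simp only [hrep_cls a ha]
      have step3 : rep a = (cls a).min' hne := dif_pos hne
      rw [step1, step2, step3]
    set R := AC.image rep with hR
    have hR_sub : R ⊆ AC := by
      intro b hb
      rw [hR, Finset.mem_image] at hb
      obtain ⟨a, ha, rfl⟩ := hb
      exact hcls_sub a (hrep_mem a ha)
    have hR_fix : ∀ b ∈ R, rep b = b := by
      intro b hb
      rw [hR, Finset.mem_image] at hb
      obtain ⟨a, ha, rfl⟩ := hb
      exact hrep_fix a ha
    -- distinct elements of R are far apart
    have hR_far : ∀ b1 ∈ R, ∀ b2 ∈ R, b1 ≠ b2 → 3 * q < d b1 b2 := by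
      intro b1 h1 b2 h2 hne
      by_contra h
      push_neg at h
      have hb1 : b1 ∈ AC := hR_sub h1
      have hb2 : b2 ∈ AC := hR_sub h2
      have hle : d b1 b2 ≤ r := by
        rcases key0' b1 hb1 b2 (hACA hb2) with h' | h'
        · exact h'
        · omega
      have : cls b1 = cls b2 := hclseq b1 hb1 b2 hb2 hle
      have hne1 : (cls b1).Nonempty := ⟨b1, hself _ hb1⟩
      have hne2 : (cls b2).Nonempty := ⟨b2, hself _ hb2⟩
      have e1 : rep b1 = b1 := hR_fix b1 h1
      have e2 : rep b2 = b2 := hR_fix b2 h2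
      simp only [rep, dif_pos hne1] at e1
      simp only [rep, dif_pos hne2] at e2
      have emin : (cls b1).min' hne1 = (cls b2).min' hne2 := by
        simp only [this]
      exact hne (by rw [← e1, ← e2, emin])
    -- AC is covered by the clusters of R
    have hcover : AC ⊆ R.biUnion cls := by
      intro a ha
      rw [Finset.mem_biUnion]
      refine ⟨rep a, Finset.mem_image_of_mem rep ha, ?_⟩
      rw [hrep_cls a ha]
      exact hself a ha
    have hcls_disj : ∀ b1 ∈ R, ∀ b2 ∈ R, b1 ≠ b2 → Disjoint (cls b1) (cls b2) := by
      intro b1 h1 b2 h2 hne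
      rw [Finset.disjoint_left]
      intro c hc1 hc2
      simp only [cls, Finset.mem_filter] at hc1 hc2
      have : d b1 b2 ≤ d b1 c + d c b2 := hd_tri b1 c b2
      rw [hd_symm c b2] at this
      have := hR_far b1 h1 b2 h2 hne
      omega
    have hcls_card : ∀ a, (cls a).card ≤ q - r := by
      intro a
      have hsub : cls a ⊆ ball a := by
        intro c hc
        simp only [cls, Finset.mem_filter] at hc
        simp [ball, hc.2]
      have := Finset.card_le_card hsub
      have := hball_card a
      omega
    -- annuli of R members are inside N \ A
    have hAnn_sub : ∀ b ∈ R, Ann b ⊆ N \ A := by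
      intro b hb y hy
      simp only [Ann, Finset.mem_filter, Finset.mem_univ, true_and] at hy
      have hbA : b ∈ A := hACA (hR_sub hb)
      rw [Finset.mem_sdiff]
      constructor
      · exact (hmemN y).mpr ⟨b, hbA, by omega, by omega⟩
      · intro hyA
        rcases key0' b (hR_sub hb) y hyA with h | h <;> omega
    have hAnn_disj : ∀ b1 ∈ R, ∀ b2 ∈ R, b1 ≠ b2 → Disjoint (Ann b1) (Ann b2) := by
      intro b1 h1 b2 h2 hne
      rw [Finset.disjoint_left]
      intro y hy1 hy2
      simp only [Ann, Finset.mem_filter, Finset.mem_univ, true_and] at hy1 hy2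
      have ht : d b1 b2 ≤ d b1 y + d y b2 := hd_tri b1 y b2
      rw [hd_symm y b2] at ht
      have := hR_far b1 h1 b2 h2 hne
      omega
    -- counting
    have hAC_card : AC.card ≤ R.card * (q - r) := by
      calc AC.card ≤ (R.biUnion cls).card := Finset.card_le_card hcover
        _ = ∑ b ∈ R, (cls b).card := Finset.card_biUnion hcls_disj
        _ ≤ ∑ _b ∈ R, (q - r) := Finset.sum_le_sum (fun b _ => hcls_card b)
        _ = R.card * (q - r) := by rw [Finset.sum_const, smul_eq_mul]
    have hNA_card : R.card * (q - r + 1) ≤ (N \ A).card := by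
      calc R.card * (q - r + 1) = ∑ _b ∈ R, (q - r + 1) := by
            rw [Finset.sum_const, smul_eq_mul]
        _ ≤ ∑ b ∈ R, (Ann b).card := Finset.sum_le_sum (fun b _ => hAnn_card b)
        _ = (R.biUnion Ann).card := (Finset.card_biUnion hAnn_disj).symm
        _ ≤ (N \ A).card := Finset.card_le_card (Finset.biUnion_subset.mpr hAnn_sub)
    have hACNA : AC.card ≤ (N \ A).card := by
      rcases Nat.eq_zero_or_pos R.card with h0 | hpos
      · have : AC = ∅ := by
          rw [← Finset.subset_empty]
          intro a ha
          have := hcover ha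
          rw [Finset.card_eq_zero.mp h0] at this
          simpa using this
        simp [this]
      · have : R.card * (q - r) + R.card ≤ (N \ A).card := by
          have : R.card * (q - r + 1) = R.card * (q - r) + R.card := by ring
          omega
        omega
    -- conclude Hall's condition
    have e1 : (A ∩ N).card + AC.card = A.card := by
      rw [hAC]
      exact Finset.card_inter_add_card_sdiff A N
    have e2 : (N ∩ A).card + (N \ A).card = N.card := Finset.card_inter_add_card_sdiff N A
    rw [Finset.inter_comm] at e1
    omega
  -- apply Hall's marriage theorem
  obtain ⟨f, hfinj, hft⟩ := (Finset.all_card_le_biUnion_card_iff_exists_injective t).mp hhall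
  have hfbij : Function.Bijective f := (Finite.injective_iff_bijective).mp hfinj
  refine ⟨Equiv.ofBijective f hfbij, ?_⟩
  intro x
  have hx := hft x
  simp only [t, Finset.mem_filter, Finset.mem_univ, true_and] at hx
  have hσ : (Equiv.ofBijective f hfbij) x = f x := rfl
  rw [hσ]
  constructor
  · have h1 : (x, f x) ∈ relPow E (3 * q) := (hd_iff x (f x) (3 * q)).mpr hx.2
    exact relPow_mono' hdiag hs h1
  · intro hmem
    have h2 : d x (f x) ≤ r := hd_le hmem
    omega
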